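/- Let z(ε, τ) = e^{−(3/4)ετ}·cos(τ − ετ²/4). Then for all real ε and τ (with ' denoting d/dτ): (1 + ετ)·z'' + 2ε·z' + z = e^{−(3/4)ετ}·[ (ε²·((3/4)τ² − 15/16) + ε³·((9/16)τ − (1/4)τ³))·cos(τ − ετ²/4) + ((9/4)·ε²τ − (3/4)·ε³τ²)·sin(τ − ετ²/4) ] exactly. In particular the residual of the renormalization-group solution is O(ε²), contains at order εⁿ only powers of τ up to τ^{n+1} (not τ^{2n+1}), and carries the same decaying factor e^{−(3/4)ετ} as the solution itself. -/

import Mathlib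

/-- Renormalization-group solution of the lengthening pendulum. -/
noncomputable def zRenorm (ε : ℝ) : ℝ → ℝ := fun τ =>
  Real.exp (-(3/4)*ε*τ) * Real.cos (τ - ε*τ^2/4)

private lemma hf (ε τ : ℝ) : HasDerivAt (fun τ : ℝ => τ - ε*τ^2/4) (1 - ε*τ/2) τ := by
  have h := (hasDerivAt_id τ).sub (((hasDerivAt_pow 2 τ).const_mul ε).div_const 4)
  refine h.congr_deriv ?_
  simp; ring

private lemma he (ε τ : ℝ) :
    HasDerivAt (fun τ : ℝ => Real.exp (-(3/4)*ε*τ)) (Real.exp (-(3/4)*ε*τ) * (-(3/4)*ε)) τ := by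
  have h : HasDerivAt (fun τ : ℝ => -(3/4)*ε*τ) (-(3/4)*ε) τ := by
    simpa using (hasDerivAt_id τ).const_mul (-(3/4)*ε)
  simpa [mul_comm] using h.exp

private lemma hz1 (ε τ : ℝ) :
    HasDerivAt (zRenorm ε)
      (Real.exp (-(3/4)*ε*τ) *
        (-(3/4)*ε * Real.cos (τ - ε*τ^2/4) - (1 - ε*τ/2) * Real.sin (τ - ε*τ^2/4))) τ := by
  have h := (he ε τ).mul ((hf ε τ).cos)
  refine h.congr_deriv ?_
  ring

private lemma hderiv1 (ε : ℝ) : deriv (zRenorm ε) = fun τ =>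
    Real.exp (-(3/4)*ε*τ) *
      (-(3/4)*ε * Real.cos (τ - ε*τ^2/4) - (1 - ε*τ/2) * Real.sin (τ - ε*τ^2/4)) := by
  funext τ; exact (hz1 ε τ).deriv

private lemma hz2 (ε τ : ℝ) :
    HasDerivAt (deriv (zRenorm ε))
      (Real.exp (-(3/4)*ε*τ) *
        (((-(3/4)*ε)^2 - (1 - ε*τ/2)^2) * Real.cos (τ - ε*τ^2/4)
          - (2*(-(3/4)*ε)*(1 - ε*τ/2) + (-(ε/2))) * Real.sin (τ - ε*τ^2/4))) τ := by
  rw [hderiv1]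
  have hu' : HasDerivAt (fun τ : ℝ => 1 - ε*τ/2) (-(ε/2)) τ := by
    have h := (hasDerivAt_const τ (1:ℝ)).sub (((hasDerivAt_id τ).const_mul ε).div_const 2)
    refine h.congr_deriv ?_; ring
  have hin : HasDerivAt
      (fun τ : ℝ => -(3/4)*ε * Real.cos (τ - ε*τ^2/4) - (1 - ε*τ/2) * Real.sin (τ - ε*τ^2/4))
      (-(3/4)*ε * (-Real.sin (τ - ε*τ^2/4) * (1 - ε*τ/2))
        - ((-(ε/2)) * Real.sin (τ - ε*τ^2/4)
            + (1 - ε*τ/2) * (Real.cos (τ - ε*τ^2/4) * (1 - ε*τ/2)))) τ :=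
    (((hf ε τ).cos).const_mul (-(3/4)*ε)).sub (hu'.mul ((hf ε τ).sin))
  have h := (he ε τ).mul hin
  refine h.congr_deriv ?_
  ring

theorem stmt15 : ∀ (ε τ : ℝ),
    (1 + ε*τ) * deriv (deriv (zRenorm ε)) τ + 2*ε * deriv (zRenorm ε) τ + zRenorm ε τ
      = Real.exp (-(3/4)*ε*τ) *
          ((ε^2 * ((3/4)*τ^2 - 15/16) + ε^3 * ((9/16)*τ - (1/4)*τ^3))
              * Real.cos (τ - ε*τ^2/4)
            + ((9/4)*ε^2*τ - (3/4)*ε^3*τ^2) * Real.sin (τ - ε*τ^2/4)) := by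
  intro ε τ
  rw [(hz2 ε τ).deriv, (hz1 ε τ).deriv]
  unfold zRenorm
  ring
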